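/- Let V be a complex Hilbert space, Ω ⊆ ℝ^m open, and k ≥ 1 an integer. If P : Ω → End V is such that for every v, w ∈ V the function x ↦ ⟨P(x)v,w⟩ is of class C^k on Ω, then P is of class C^{k−1} as a map into (End V, ‖·‖_op). -/

import Mathlib

open Complex Metric Filter Set
open scoped Topology

noncomputable section
set_option linter.unusedSectionVars false

variable {V : Type*} [NormedAddCommGroup V] [InnerProductSpace ℂ V] [CompleteSpace V]

private lemma norm_le_of_inner_le {u : V} {M : ℝ} (hM : 0 ≤ M)
    (h : ∀ w : V, ‖(inner ℂ w u : ℂ)‖ ≤ M * ‖w‖) : ‖u‖ ≤ M := by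
  rcases eq_or_ne u 0 with rfl | hu
  · simpa using hM
  · have h1 := h u
    rw [inner_self_eq_norm_sq_to_K (𝕜 := ℂ)] at h1
    have : ‖u‖ * ‖u‖ ≤ M * ‖u‖ := by
      calc ‖u‖ * ‖u‖ = ‖((‖u‖ : ℂ)) ^ 2‖ := by rw [norm_pow]; simp [sq]
        _ ≤ M * ‖u‖ := h1
    exact le_of_mul_le_mul_right this (norm_pos_iff.2 hu)

private lemma opNorm_le_of_inner {T : V →L[ℂ] V} {M : ℝ} (hM : 0 ≤ M)
    (h : ∀ v w : V, ‖(inner ℂ w (T v) : ℂ)‖ ≤ M * ‖v‖ * ‖w‖) : ‖T‖ ≤ M :=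
  T.opNorm_le_bound hM fun v => norm_le_of_inner_le (by positivity) fun w => h v w

private lemma ubp2 {ι : Type*} (T : ι → V →L[ℂ] V)
    (h : ∀ v w : V, ∃ C, ∀ i, ‖(inner ℂ w (T i v) : ℂ)‖ ≤ C) :
    ∃ C, ∀ i, ‖T i‖ ≤ C := by
  refine banach_steinhaus fun v => ?_
  obtain ⟨C, hC⟩ := banach_steinhaus (g := fun i => innerSL ℂ (T i v)) fun w => by
    obtain ⟨C, hC⟩ := h v w
    exact ⟨C, fun i => by simpa [norm_inner_symm] using hC i⟩
  exact ⟨C, fun i => by simpa [innerSL_apply_norm] using hC i⟩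

private lemma loc_lip {m : ℕ} {Ω : Set (EuclideanSpace ℝ (Fin m))} (hΩ : IsOpen Ω)
    {P : EuclideanSpace ℝ (Fin m) → V →L[ℂ] V}
    (hP : ∀ v w : V, ContDiffOn ℝ 1 (fun x => (inner ℂ w (P x v) : ℂ)) Ω)
    {x₀ : EuclideanSpace ℝ (Fin m)} (hx₀ : x₀ ∈ Ω) :
    ∃ r > 0, closedBall x₀ r ⊆ Ω ∧ ∃ C, 0 ≤ C ∧
      ∀ x ∈ closedBall x₀ r, ∀ y ∈ closedBall x₀ r, ‖P y - P x‖ ≤ C * ‖y - x‖ := by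
  obtain ⟨r, hr, hsub⟩ := nhds_basis_closedBall.mem_iff.1 (hΩ.mem_nhds hx₀)
  refine ⟨r, hr, hsub, ?_⟩
  set B := closedBall x₀ r with hB
  -- scalar Lipschitz bounds on B
  have key : ∀ v w : V, ∃ M, ∀ x ∈ B, ∀ y ∈ B,
      ‖(inner ℂ w (P y v) : ℂ) - inner ℂ w (P x v)‖ ≤ M * ‖y - x‖ := by
    intro v w
    have hdiff : ∀ z ∈ B, DifferentiableAt ℝ (fun x => (inner ℂ w (P x v) : ℂ)) z := fun z hz =>
      (((hP v w).differentiableOn one_ne_zero).differentiableAt (hΩ.mem_nhds (hsub hz)))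
    have hcont : ContinuousOn (fderiv ℝ (fun x => (inner ℂ w (P x v) : ℂ))) Ω :=
      (hP v w).continuousOn_fderiv_of_isOpen hΩ le_rfl
    obtain ⟨M, hM⟩ := (isCompact_closedBall x₀ r).exists_bound_of_continuousOn
      (hcont.mono hsub)
    exact ⟨M, fun x hx y hy =>
      (convex_closedBall x₀ r).norm_image_sub_le_of_norm_fderiv_le hdiff hM hx hy⟩
  -- family of difference quotients
  set ι := {p : (EuclideanSpace ℝ (Fin m)) × (EuclideanSpace ℝ (Fin m)) //
    (p.1 ∈ B ∧ p.2 ∈ B) ∧ p.1 ≠ p.2} with hι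
  set T : ι → V →L[ℂ] V := fun p => (‖p.1.2 - p.1.1‖⁻¹ : ℝ) • (P p.1.2 - P p.1.1) with hT
  obtain ⟨C₀, hC₀⟩ := ubp2 T (by
    intro v w
    obtain ⟨M, hM⟩ := key v w
    refine ⟨|M|, fun p => ?_⟩
    obtain ⟨⟨x, y⟩, ⟨hx, hy⟩, hne⟩ := p
    have hxy : (0:ℝ) < ‖y - x‖ := by
      rw [norm_pos_iff, sub_ne_zero]; exact fun h => hne h.symm
    have : (inner ℂ w ((T ⟨(x,y), ⟨hx, hy⟩, hne⟩) v) : ℂ)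
        = (‖y - x‖⁻¹ : ℝ) • ((inner ℂ w (P y v) : ℂ) - inner ℂ w (P x v)) := by
      simp only [hT, ContinuousLinearMap.smul_apply, ContinuousLinearMap.sub_apply]
      rw [RCLike.real_smul_eq_coe_smul (K := ℂ), inner_smul_right, inner_sub_right,
        RCLike.real_smul_eq_coe_smul (K := ℂ), smul_eq_mul]
    rw [this, norm_smul]
    simp only [norm_inv, Real.norm_eq_abs, abs_norm]
    calc ‖y - x‖⁻¹ * ‖(inner ℂ w (P y v) : ℂ) - inner ℂ w (P x v)‖
        ≤ ‖y - x‖⁻¹ * (M * ‖y - x‖) := by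
          gcongr; exact hM x hx y hy
      _ = M := by field_simp
      _ ≤ |M| := le_abs_self M)
  refine ⟨max C₀ 0, le_max_right _ _, fun x hx y hy => ?_⟩
  rcases eq_or_ne x y with rfl | hne
  · simp
  have hxy : (0:ℝ) < ‖y - x‖ := by rw [norm_pos_iff, sub_ne_zero]; exact fun h => hne h.symm
  have h1 : ‖T ⟨(x,y), ⟨hx, hy⟩, hne⟩‖ ≤ C₀ := hC₀ _
  have h2 : ‖T ⟨(x,y), ⟨hx, hy⟩, hne⟩‖ = ‖y - x‖⁻¹ * ‖P y - P x‖ := by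
    simp [hT, norm_smul, abs_of_pos (inv_pos.2 hxy)]
  calc ‖P y - P x‖ = ‖y - x‖ * (‖y - x‖⁻¹ * ‖P y - P x‖) := by field_simp
    _ ≤ ‖y - x‖ * C₀ := by gcongr; rw [← h2]; exact h1
    _ ≤ max C₀ 0 * ‖y - x‖ := by rw [mul_comm]; gcongr; exact le_max_left _ _

private lemma fderiv_bound {m : ℕ} {Ω : Set (EuclideanSpace ℝ (Fin m))} (hΩ : IsOpen Ω)
    {P : EuclideanSpace ℝ (Fin m) → V →L[ℂ] V}
    (hP : ∀ v w : V, ContDiffOn ℝ 1 (fun x => (inner ℂ w (P x v) : ℂ)) Ω)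
    {x₀ : EuclideanSpace ℝ (Fin m)} (hx₀ : x₀ ∈ Ω) :
    ∃ C, 0 ≤ C ∧ ∀ v w : V,
      ‖fderiv ℝ (fun x => (inner ℂ w (P x v) : ℂ)) x₀‖ ≤ C * ‖v‖ * ‖w‖ := by
  obtain ⟨r, hr, hsub, C, hC0, hlip⟩ := loc_lip hΩ hP hx₀
  refine ⟨C, hC0, fun v w => ?_⟩
  refine norm_fderiv_le_of_lip' ℝ (by positivity) ?_
  filter_upwards [closedBall_mem_nhds x₀ hr] with x hx
  have h1 : (inner ℂ w (P x v) : ℂ) - inner ℂ w (P x₀ v) = inner ℂ w ((P x - P x₀) v) := by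
    simp [ContinuousLinearMap.sub_apply, inner_sub_right]
  rw [h1]
  calc ‖(inner ℂ w ((P x - P x₀) v) : ℂ)‖ ≤ ‖(P x - P x₀) v‖ * ‖w‖ := by
        rw [norm_inner_symm]; exact norm_inner_le_norm _ _
    _ ≤ (‖P x - P x₀‖ * ‖v‖) * ‖w‖ := by
        gcongr; exact ContinuousLinearMap.le_opNorm _ _
    _ ≤ (C * ‖x - x₀‖ * ‖v‖) * ‖w‖ := by
        gcongr; exact hlip _ (mem_closedBall_self hr.le) _ hx
    _ = C * ‖v‖ * ‖w‖ * ‖x - x₀‖ := by ring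

open scoped Classical in
private def Qop {m : ℕ} (P : EuclideanSpace ℝ (Fin m) → V →L[ℂ] V) (i : Fin m)
    (x : EuclideanSpace ℝ (Fin m)) : V →L[ℂ] V :=
  if h : ∃ T : V →L[ℂ] V, ∀ v w : V, (inner ℂ w (T v) : ℂ) =
      fderiv ℝ (fun y => (inner ℂ w (P y v) : ℂ)) x (EuclideanSpace.single i 1)
  then h.choose else 0

private lemma Qop_spec {m : ℕ} {Ω : Set (EuclideanSpace ℝ (Fin m))} (hΩ : IsOpen Ω)
    {P : EuclideanSpace ℝ (Fin m) → V →L[ℂ] V}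
    (hP : ∀ v w : V, ContDiffOn ℝ 1 (fun x => (inner ℂ w (P x v) : ℂ)) Ω)
    {x : EuclideanSpace ℝ (Fin m)} (hx : x ∈ Ω) (i : Fin m) :
    ∀ v w : V, (inner ℂ w (Qop P i x v) : ℂ) =
      fderiv ℝ (fun y => (inner ℂ w (P y v) : ℂ)) x (EuclideanSpace.single i 1) := by
  obtain ⟨C, hC0, hC⟩ := fderiv_bound hΩ hP hx
  have dAt : ∀ v w : V, DifferentiableAt ℝ (fun y => (inner ℂ w (P y v) : ℂ)) x := fun v w =>
    ((hP v w).differentiableOn one_ne_zero).differentiableAt (hΩ.mem_nhds hx)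
  set e : EuclideanSpace ℝ (Fin m) := EuclideanSpace.single i 1 with he
  set D : V → V → ℂ := fun v w => fderiv ℝ (fun y => (inner ℂ w (P y v) : ℂ)) x e with hD
  have hDbound : ∀ v w, ‖D v w‖ ≤ C * ‖v‖ * ‖w‖ := by
    intro v w
    calc ‖D v w‖ ≤ ‖fderiv ℝ (fun y => (inner ℂ w (P y v) : ℂ)) x‖ * ‖e‖ :=
          ContinuousLinearMap.le_opNorm _ _
      _ ≤ C * ‖v‖ * ‖w‖ * 1 := by
          gcongr
          · exact hC v w
          · rw [he, EuclideanSpace.norm_single]; norm_num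
      _ = C * ‖v‖ * ‖w‖ := mul_one _
  have hDadd_w : ∀ v w w', D v (w + w') = D v w + D v w' := by
    intro v w w'
    have h0 : (fun y => (inner ℂ (w + w') (P y v) : ℂ)) =
        fun y => (inner ℂ w (P y v) : ℂ) + (inner ℂ w' (P y v) : ℂ) := by
      funext y; rw [inner_add_left]
    simp only [hD, h0]
    rw [fderiv_fun_add (dAt v w) (dAt v w')]; rfl
  have hDsmul_w : ∀ (c : ℂ) v w, D v (c • w) = (starRingEnd ℂ c) * D v w := by
    intro c v w
    have h0 : (fun y => (inner ℂ (c • w) (P y v) : ℂ)) =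
        fun y => (starRingEnd ℂ c) • (inner ℂ w (P y v) : ℂ) := by
      funext y; rw [inner_smul_left]; rfl
    simp only [hD, h0]
    rw [fderiv_fun_const_smul (dAt v w)]; rfl
  have hDadd_v : ∀ v v' w, D (v + v') w = D v w + D v' w := by
    intro v v' w
    have h0 : (fun y => (inner ℂ w (P y (v + v')) : ℂ)) =
        fun y => (inner ℂ w (P y v) : ℂ) + (inner ℂ w (P y v') : ℂ) := by
      funext y; rw [map_add, inner_add_right]
    simp only [hD, h0]
    rw [fderiv_fun_add (dAt v w) (dAt v' w)]; rfl
  have hDsmul_v : ∀ (c : ℂ) v w, D (c • v) w = c * D v w := by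
    intro c v w
    have h0 : (fun y => (inner ℂ w (P y (c • v)) : ℂ)) =
        fun y => c • (inner ℂ w (P y v) : ℂ) := by
      funext y; rw [map_smul, inner_smul_right, smul_eq_mul]
    simp only [hD, h0]
    rw [fderiv_fun_const_smul (dAt v w)]; rfl
  set φ : V → V →L[ℂ] ℂ := fun v => LinearMap.mkContinuous
    { toFun := fun w => starRingEnd ℂ (D v w)
      map_add' := fun w w' => by simp [hDadd_w]
      map_smul' := fun c w => by simp [hDsmul_w] }
    (C * ‖v‖) (fun w => by
      simp only [LinearMap.coe_mk, AddHom.coe_mk]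
      rw [RCLike.norm_conj]
      exact hDbound v w) with hφ
  have hφ_apply : ∀ v w, φ v w = starRingEnd ℂ (D v w) := fun v w => rfl
  have hφ_norm : ∀ v, ‖φ v‖ ≤ C * ‖v‖ := fun v =>
    LinearMap.mkContinuous_norm_le _ (by positivity) _
  set T₀ : V →ₗ[ℂ] V :=
    { toFun := fun v => (InnerProductSpace.toDual ℂ V).symm (φ v)
      map_add' := fun v v' => by
        have h1 : φ (v + v') = φ v + φ v' := by
          ext w
          simp only [hφ_apply, ContinuousLinearMap.add_apply, hDadd_v, map_add]
        show (InnerProductSpace.toDual ℂ V).symm (φ (v + v')) = _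
        rw [h1, map_add]
      map_smul' := fun c v => by
        have h1 : φ (c • v) = (starRingEnd ℂ c) • φ v := by
          ext w
          simp only [hφ_apply, ContinuousLinearMap.smul_apply, hDsmul_v, map_mul, smul_eq_mul]
        show (InnerProductSpace.toDual ℂ V).symm (φ (c • v)) = _
        rw [h1, LinearIsometryEquiv.map_smulₛₗ]
        simp } with hT₀
  have hex : ∃ T : V →L[ℂ] V, ∀ v w : V, (inner ℂ w (T v) : ℂ) =
      fderiv ℝ (fun y => (inner ℂ w (P y v) : ℂ)) x (EuclideanSpace.single i 1) := by
    have hb : ∀ v, ‖T₀ v‖ ≤ C * ‖v‖ := fun v => by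
      have h1 : ‖T₀ v‖ = ‖φ v‖ := by
        show ‖(InnerProductSpace.toDual ℂ V).symm (φ v)‖ = _
        exact LinearIsometryEquiv.norm_map _ _
      rw [h1]; exact hφ_norm v
    refine ⟨T₀.mkContinuous C hb, fun v w => ?_⟩
    have hTv : (T₀.mkContinuous C hb) v = (InnerProductSpace.toDual ℂ V).symm (φ v) := rfl
    rw [← inner_conj_symm, hTv, InnerProductSpace.toDual_symm_apply, hφ_apply,
      Complex.conj_conj]
  intro v w
  have hq : Qop P i x = hex.choose := dif_pos hex
  rw [hq]
  exact hex.choose_spec v w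

private def Aop {m : ℕ} (P : EuclideanSpace ℝ (Fin m) → V →L[ℂ] V)
    (x : EuclideanSpace ℝ (Fin m)) : EuclideanSpace ℝ (Fin m) →L[ℝ] (V →L[ℂ] V) :=
  ∑ i, (EuclideanSpace.proj i).smulRight (Qop P i x)

private lemma fderiv_inner_eq {m : ℕ} {Ω : Set (EuclideanSpace ℝ (Fin m))} (hΩ : IsOpen Ω)
    {P : EuclideanSpace ℝ (Fin m) → V →L[ℂ] V}
    (hP : ∀ v w : V, ContDiffOn ℝ 1 (fun x => (inner ℂ w (P x v) : ℂ)) Ω)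
    {x : EuclideanSpace ℝ (Fin m)} (hx : x ∈ Ω) (u : EuclideanSpace ℝ (Fin m)) (v w : V) :
    fderiv ℝ (fun y => (inner ℂ w (P y v) : ℂ)) x u = inner ℂ w ((Aop P x u) v) := by
  have hrep : ∑ i, u i • EuclideanSpace.single i (1:ℝ) = u := by
    have h := (EuclideanSpace.basisFun (Fin m) ℝ).sum_repr u
    simpa [EuclideanSpace.basisFun_apply, EuclideanSpace.basisFun_repr] using h
  have h1 : (Aop P x u) v = ∑ i, u i • (Qop P i x v) := by
    simp [Aop, ContinuousLinearMap.sum_apply, ContinuousLinearMap.smulRight_apply,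
      ContinuousLinearMap.coe_smul', Pi.smul_apply]
  rw [h1, inner_sum]
  have h2 : ∀ i : Fin m, (inner ℂ w (u i • Qop P i x v) : ℂ)
      = u i • fderiv ℝ (fun y => (inner ℂ w (P y v) : ℂ)) x (EuclideanSpace.single i 1) := by
    intro i
    rw [RCLike.real_smul_eq_coe_smul (K := ℂ), inner_smul_right,
      Qop_spec hΩ hP hx i v w, RCLike.real_smul_eq_coe_smul (K := ℂ), smul_eq_mul]
  rw [Finset.sum_congr rfl fun i _ => h2 i]
  conv_lhs => rw [← hrep]
  rw [map_sum]
  simp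

private lemma main_ind {m : ℕ} {Ω : Set (EuclideanSpace ℝ (Fin m))} (hΩ : IsOpen Ω) :
    ∀ (n : ℕ) (P : EuclideanSpace ℝ (Fin m) → V →L[ℂ] V),
      (∀ v w : V, ContDiffOn ℝ ((n + 1 : ℕ) : ℕ∞) (fun x => (inner ℂ w (P x v) : ℂ)) Ω) →
      ContDiffOn ℝ (n : ℕ∞) P Ω := by
  intro n
  induction n with
  | zero =>
    intro P hP
    have hP1 : ∀ v w : V, ContDiffOn ℝ 1 (fun x => (inner ℂ w (P x v) : ℂ)) Ω := fun v w => by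
      have := hP v w; exact_mod_cast this
    suffices hcont : ContinuousOn P Ω by exact_mod_cast contDiffOn_zero.2 hcont
    intro x hx
    obtain ⟨r, hr, hsub, C, hC0, hlip⟩ := loc_lip hΩ hP1 hx
    have hL : LipschitzOnWith ⟨C, hC0⟩ P (closedBall x r) :=
      LipschitzOnWith.of_dist_le_mul fun a ha b hb => by
        rw [dist_eq_norm, dist_eq_norm]; exact hlip b hb a ha
    exact (hL.continuousOn.continuousAt (closedBall_mem_nhds x hr)).continuousWithinAt
  | succ n ih =>
    intro P hP
    have hP1 : ∀ v w : V, ContDiffOn ℝ 1 (fun x => (inner ℂ w (P x v) : ℂ)) Ω := fun v w =>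
      (hP v w).of_le (by exact_mod_cast Nat.succ_le_succ (Nat.zero_le _))
    have hQw : ∀ (i : Fin m) (v w : V), ContDiffOn ℝ ((n + 1 : ℕ) : ℕ∞)
        (fun x => (inner ℂ w (Qop P i x v) : ℂ)) Ω := by
      intro i v w
      have h1 : ContDiffOn ℝ ((n + 1 : ℕ) : ℕ∞)
          (fderiv ℝ (fun y => (inner ℂ w (P y v) : ℂ))) Ω :=
        (hP v w).fderiv_of_isOpen hΩ (by exact_mod_cast le_refl (n + 2))
      have h2 := h1.clm_apply (contDiffOn_const (c := EuclideanSpace.single i (1:ℝ)))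
      exact h2.congr fun x hx => Qop_spec hΩ hP1 hx i v w
    have hQ : ∀ i : Fin m, ContDiffOn ℝ (n : ℕ∞) (Qop P i) Ω := fun i => ih (Qop P i) (hQw i)
    have hA : ContDiffOn ℝ (n : ℕ∞) (fun x => Aop P x) Ω := by
      unfold Aop
      refine ContDiffOn.sum fun i _ => ?_
      exact (ContinuousLinearMap.smulRightL ℝ (EuclideanSpace ℝ (Fin m)) (V →L[ℂ] V)
        (EuclideanSpace.proj i)).contDiff.comp_contDiffOn (hQ i)
    have hfd : ∀ x ∈ Ω, HasFDerivAt P (Aop P x) x := by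
      intro x hx
      have hAc : ContinuousAt (fun z => Aop P z) x :=
        hA.continuousOn.continuousAt (hΩ.mem_nhds hx)
      rw [hasFDerivAt_iff_isLittleO, Asymptotics.isLittleO_iff]
      intro c hc
      have e1 : {z | ‖Aop P z - Aop P x‖ < c} ∈ 𝓝 x := by
        have h := hAc (ball_mem_nhds (Aop P x) hc)
        filter_upwards [h] with z hz
        simpa [dist_eq_norm] using hz
      obtain ⟨δ, hδ, hδsub⟩ := Metric.mem_nhds_iff.1 (inter_mem e1 (hΩ.mem_nhds hx))
      have hδΩ : ball x δ ⊆ Ω := fun z hz => (hδsub hz).2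
      have hδA : ∀ z ∈ ball x δ, ‖Aop P z - Aop P x‖ ≤ c := fun z hz => (hδsub hz).1.le
      filter_upwards [ball_mem_nhds x hδ] with y hy
      show ‖P y - P x - (Aop P x) (y - x)‖ ≤ c * ‖y - x‖
      refine opNorm_le_of_inner (by positivity) fun v w => ?_
      set g := fun z => (inner ℂ w (P z v) : ℂ) with hg
      have hgd : ∀ z ∈ ball x δ, DifferentiableAt ℝ g z := fun z hz =>
        ((hP1 v w).differentiableOn one_ne_zero).differentiableAt (hΩ.mem_nhds (hδΩ hz))
      have hbound : ∀ z ∈ ball x δ, ‖fderiv ℝ g z - fderiv ℝ g x‖ ≤ c * ‖v‖ * ‖w‖ := by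
        intro z hz
        refine ContinuousLinearMap.opNorm_le_bound _ (by positivity) fun u => ?_
        have h3 : (fderiv ℝ g z - fderiv ℝ g x) u = inner ℂ w (((Aop P z - Aop P x) u) v) := by
          simp only [ContinuousLinearMap.sub_apply, hg]
          rw [fderiv_inner_eq hΩ hP1 (hδΩ hz) u v w, fderiv_inner_eq hΩ hP1 hx u v w, ← inner_sub_right]
        rw [h3]
        calc ‖(inner ℂ w (((Aop P z - Aop P x) u) v) : ℂ)‖
            ≤ ‖((Aop P z - Aop P x) u) v‖ * ‖w‖ := by
              rw [norm_inner_symm]; exact norm_inner_le_norm _ _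
          _ ≤ (‖(Aop P z - Aop P x) u‖ * ‖v‖) * ‖w‖ := by
              gcongr; exact ContinuousLinearMap.le_opNorm _ _
          _ ≤ ((‖Aop P z - Aop P x‖ * ‖u‖) * ‖v‖) * ‖w‖ := by
              gcongr; exact ContinuousLinearMap.le_opNorm _ _
          _ ≤ ((c * ‖u‖) * ‖v‖) * ‖w‖ := by gcongr; exact hδA z hz
          _ = c * ‖v‖ * ‖w‖ * ‖u‖ := by ring
      have hmvt := (convex_ball x δ).norm_image_sub_le_of_norm_fderiv_le' hgd hbound
        (mem_ball_self hδ) hy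
      have heq : (inner ℂ w ((P y - P x - (Aop P x) (y - x)) v) : ℂ)
          = g y - g x - (fderiv ℝ g x) (y - x) := by
        rw [hg]
        simp only [ContinuousLinearMap.sub_apply, inner_sub_right]
        rw [fderiv_inner_eq hΩ hP1 hx (y - x) v w]
      rw [heq]
      calc ‖g y - g x - (fderiv ℝ g x) (y - x)‖ ≤ c * ‖v‖ * ‖w‖ * ‖y - x‖ := hmvt
        _ = c * ‖y - x‖ * ‖v‖ * ‖w‖ := by ring
    have hdiff : DifferentiableOn ℝ P Ω := fun x hx =>
      (hfd x hx).differentiableAt.differentiableWithinAt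
    have hmain : ContDiffOn ℝ ((n : WithTop ℕ∞) + 1) P Ω := by
      rw [contDiffOn_succ_iff_fderivWithin hΩ.uniqueDiffOn]
      refine ⟨hdiff, ?_, ?_⟩
      · intro h; simp at h
      · exact hA.congr fun x hx =>
          (fderivWithin_of_isOpen hΩ hx).trans (hfd x hx).fderiv
    exact_mod_cast hmain

/-- Proposition 2.3: a weakly `C^k` operator-valued map is
`C^{k-1}` in the operator norm topology. -/
theorem weak_Ck_implies_op_Ck_sub_one
    {m : ℕ} (Ω : Set (EuclideanSpace ℝ (Fin m))) (hΩ : IsOpen Ω)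
    (k : ℕ) (hk : 1 ≤ k)
    (P : EuclideanSpace ℝ (Fin m) → (V →L[ℂ] V))
    (hP : ∀ v w : V, ContDiffOn ℝ (k : ℕ∞) (fun x => (inner ℂ w (P x v) : ℂ)) Ω) :
    ContDiffOn ℝ ((k - 1 : ℕ) : ℕ∞) P Ω := by
  refine main_ind hΩ (k - 1) P fun v w => ?_
  rw [Nat.sub_add_cancel hk]
  exact hP v w
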